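/- Let a timestamped log over a time interval [t0, t_cur] starting from a well-formed graph SG_{t0} be given, and fix t ∈ [t0, t_cur]. Then from the single maintained snapshot SG_t and the log, every snapshot SG_{t'} with t' ∈ [t0, t_cur] can be reconstructed: (forward reconstruction) if t ≤ t', applying to SG_t the subsequence of logged operations with timestamps in (t, t'] yields SG_{t'}; (backward reconstruction) if t' < t, applying to SG_t the inverses of the logged operations with timestamps in (t', t], taken in reverse order, yields SG_{t'}. -/

import Mathlib

/-- A graph over a node type `α`: a set of nodes and a set of edges
(unordered pairs of nodes). -/
structure OpGraph (α : Type*) where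
  V : Set α
  E : Set (Sym2 α)

/-- A graph is well-formed if its edges are pairs of *distinct* nodes and
both endpoints of every edge belong to the node set. -/
def OpGraph.WellFormed {α : Type*} (G : OpGraph α) : Prop :=
  (∀ e ∈ G.E, ¬ e.IsDiag) ∧ ∀ e ∈ G.E, ∀ v ∈ e, v ∈ G.V

/-- Update operations on graphs. -/
inductive Op (α : Type*) where
  | addNode (v : α)
  | remNode (v : α)
  | addEdge (e : Sym2 α)
  | remEdge (e : Sym2 α)

/-- The action of a single operation on a graph: `addNode v` adds the node `v`;
`remNode v` removes `v` and all edges incident to it; `addEdge e` adds the edge `e`;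
`remEdge e` removes the edge `e`. -/
def applyOp {α : Type*} (G : OpGraph α) : Op α → OpGraph α
  | Op.addNode v => ⟨G.V ∪ {v}, G.E⟩
  | Op.remNode v => ⟨G.V \ {v}, {e ∈ G.E | v ∉ e}⟩
  | Op.addEdge e => ⟨G.V, G.E ∪ {e}⟩
  | Op.remEdge e => ⟨G.V, G.E \ {e}⟩

/-- Applying a sequence of operations to a graph, from left to right. -/
def applySeq {α : Type*} (G : OpGraph α) (l : List (Op α)) : OpGraph α :=
  l.foldl applyOp G

/-- Validity of an operation at a graph. -/
def validAt {α : Type*} (G : OpGraph α) : Op α → Prop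
  | Op.addNode v => v ∉ G.V
  | Op.remNode v => v ∈ G.V ∧ ∀ e ∈ G.E, v ∉ e
  | Op.addEdge e => ¬ e.IsDiag ∧ (∀ v ∈ e, v ∈ G.V) ∧ e ∉ G.E
  | Op.remEdge e => e ∈ G.E

/-- The inverse of an operation. -/
def Op.inv {α : Type*} : Op α → Op α
  | Op.addNode v => Op.remNode v
  | Op.remNode v => Op.addNode v
  | Op.addEdge e => Op.remEdge e
  | Op.remEdge e => Op.addEdge e

/-- Validity of a sequence of operations at a graph: each operation is valid at the
graph obtained by applying the preceding operations. -/
def validSeq {α : Type*} : OpGraph α → List (Op α) → Prop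
  | _, [] => True
  | G, op :: rest => validAt G op ∧ validSeq (applyOp G op) rest
/-- The snapshot at time `t` determined by an initial graph `SG0` and a timestamped
log `L`: the result of applying to `SG0` the logged operations with timestamp `≤ t`. -/
def snapshot {α τ : Type*} [LinearOrder τ] (SG0 : OpGraph α) (L : List (Op α × τ))
    (t : τ) : OpGraph α :=
  applySeq SG0 ((L.filter fun p => decide (p.2 ≤ t)).map Prod.fst)


section Aux
variable {α τ : Type*}

lemma applySeq_append (G : OpGraph α) (l1 l2 : List (Op α)) :
    applySeq G (l1 ++ l2) = applySeq (applySeq G l1) l2 :=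
  List.foldl_append

lemma validSeq_append (G : OpGraph α) (l1 l2 : List (Op α)) :
    validSeq G (l1 ++ l2) ↔ validSeq G l1 ∧ validSeq (applySeq G l1) l2 := by
  induction l1 generalizing G with
  | nil => simp [validSeq, applySeq]
  | cons op rest ih =>
      simp only [List.cons_append, validSeq, applySeq, List.foldl_cons]
      rw [ih]
      simp [applySeq, and_assoc]

lemma wf_applyOp {G : OpGraph α} {op : Op α} (hwf : G.WellFormed) (hv : validAt G op) :
    (applyOp G op).WellFormed := by
  obtain ⟨hd, he⟩ := hwf
  cases op with
  | addNode v =>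
      exact ⟨hd, fun e heE w hw => Or.inl (he e heE w hw)⟩
  | remNode v =>
      refine ⟨fun e heE => hd e heE.1, fun e heE w hw => ⟨he e heE.1 w hw, ?_⟩⟩
      intro h; subst h; exact heE.2 hw
  | addEdge e =>
      constructor
      · rintro f (hf | hf)
        · exact hd f hf
        · simp only [Set.mem_singleton_iff] at hf; subst hf; exact hv.1
      · rintro f (hf | hf) w hw
        · exact he f hf w hw
        · simp only [Set.mem_singleton_iff] at hf; subst hf; exact hv.2.1 w hw
  | remEdge e =>
      exact ⟨fun f hf => hd f hf.1, fun f hf w hw => he f hf.1 w hw⟩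

lemma applyOp_inv {G : OpGraph α} {op : Op α} (hwf : G.WellFormed) (hv : validAt G op) :
    applyOp (applyOp G op) op.inv = G := by
  obtain ⟨V, E⟩ := G
  obtain ⟨hd, he⟩ := hwf
  cases op with
  | addNode v =>
      simp only [applyOp, Op.inv, OpGraph.mk.injEq]
      constructor
      · ext w
        simp only [Set.mem_diff, Set.mem_union, Set.mem_singleton_iff]
        constructor
        · rintro ⟨h1 | h1, h2⟩
          · exact h1
          · exact absurd h1 h2
        · intro h; exact ⟨Or.inl h, fun hh => hv (hh ▸ h)⟩
      · ext e
        simp only [Set.mem_setOf_eq, and_iff_left_iff_imp]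
        intro heE hve
        exact hv (he e heE v hve)
  | remNode v =>
      simp only [applyOp, Op.inv, OpGraph.mk.injEq]
      constructor
      · ext w
        simp only [Set.mem_union, Set.mem_diff, Set.mem_singleton_iff]
        constructor
        · rintro (⟨h1, _⟩ | h1)
          · exact h1
          · exact h1 ▸ hv.1
        · intro h
          by_cases hw : w = v
          · exact Or.inr hw
          · exact Or.inl ⟨h, hw⟩
      · ext e
        simp only [Set.mem_setOf_eq, and_iff_left_iff_imp]
        exact fun heE => hv.2 e heE
  | addEdge e =>
      simp only [applyOp, Op.inv, OpGraph.mk.injEq, true_and]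
      ext f
      simp only [Set.mem_diff, Set.mem_union, Set.mem_singleton_iff]
      constructor
      · rintro ⟨h1 | h1, h2⟩
        · exact h1
        · exact absurd h1 h2
      · intro h; exact ⟨Or.inl h, fun hh => hv.2.2 (hh ▸ h)⟩
  | remEdge e =>
      simp only [applyOp, Op.inv, OpGraph.mk.injEq, true_and]
      ext f
      simp only [Set.mem_union, Set.mem_diff, Set.mem_singleton_iff]
      constructor
      · rintro (⟨h1, _⟩ | h1)
        · exact h1
        · exact h1 ▸ hv
      · intro h
        by_cases hf : f = e
        · exact Or.inr hf
        · exact Or.inl ⟨h, hf⟩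

lemma wf_applySeq {G : OpGraph α} {l : List (Op α)} (hwf : G.WellFormed)
    (hv : validSeq G l) : (applySeq G l).WellFormed := by
  induction l generalizing G with
  | nil => exact hwf
  | cons op rest ih =>
      exact ih (wf_applyOp hwf hv.1) hv.2

lemma applySeq_inv {G : OpGraph α} {l : List (Op α)} (hwf : G.WellFormed)
    (hv : validSeq G l) :
    applySeq (applySeq G l) ((l.reverse).map Op.inv) = G := by
  induction l generalizing G with
  | nil => rfl
  | cons op rest ih =>
      have h1 : applySeq G (op :: rest) = applySeq (applyOp G op) rest := rfl
      rw [h1, List.reverse_cons, List.map_append, applySeq_append,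
        ih (wf_applyOp hwf hv.1) hv.2]
      simpa [applySeq] using applyOp_inv hwf hv.1

lemma filter_split [LinearOrder τ] {β : Type*} (f : β → τ) (L : List β)
    (hmono : L.Pairwise fun p q => f p ≤ f q) (t t' : τ) (htt : t ≤ t') :
    L.filter (fun p => decide (f p ≤ t')) =
      L.filter (fun p => decide (f p ≤ t)) ++
        L.filter (fun p => decide (t < f p ∧ f p ≤ t')) := by
  induction L with
  | nil => rfl
  | cons a L ih =>
      rw [List.pairwise_cons] at hmono
      have ihL := ih hmono.2
      by_cases ha : f a ≤ t
      · have ha' : f a ≤ t' := le_trans ha htt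
        have : (decide (t < f a ∧ f a ≤ t')) = false := by
          simp [not_lt.2 ha]
        simp [List.filter_cons, ha, ha', this, ihL]
      · have hnil : L.filter (fun p => decide (f p ≤ t)) = [] := by
          rw [List.filter_eq_nil_iff]
          intro b hb
          simp only [decide_eq_true_eq, not_le]
          exact lt_of_not_ge (fun hh => ha (le_trans (hmono.1 b hb) hh))
        have hta : t < f a := lt_of_not_ge ha
        rw [hnil] at ihL
        simp only [List.nil_append] at ihL
        by_cases ha' : f a ≤ t'
        · simp [List.filter_cons, ha, ha', hta, hnil, ihL]
        · simp [List.filter_cons, ha, ha', hta, hnil, ihL]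

end Aux

/-- From the single maintained snapshot `SG_t` and the log, every snapshot `SG_{t'}`
can be reconstructed: forward reconstruction (applying the logged operations with
timestamps in `(t, t']`) when `t ≤ t'`, and backward reconstruction (applying the
inverses of the logged operations with timestamps in `(t', t]`, in reverse order)
when `t' < t`. -/
theorem snapshot_reconstruction {α τ : Type*} [LinearOrder τ]
    (t0 tcur : τ) (SG0 : OpGraph α) (L : List (Op α × τ))
    (hwf : SG0.WellFormed)
    (hts : ∀ p ∈ L, t0 ≤ p.2 ∧ p.2 ≤ tcur)
    (hmono : L.Pairwise fun p q => p.2 ≤ q.2)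
    (hval : validSeq SG0 (L.map Prod.fst))
    (t : τ) (ht : t0 ≤ t ∧ t ≤ tcur)
    (t' : τ) (ht' : t0 ≤ t' ∧ t' ≤ tcur) :
    (t ≤ t' →
      applySeq (snapshot SG0 L t)
        ((L.filter fun p => decide (t < p.2 ∧ p.2 ≤ t')).map Prod.fst) =
      snapshot SG0 L t') ∧
    (t' < t →
      applySeq (snapshot SG0 L t)
        ((((L.filter fun p => decide (t' < p.2 ∧ p.2 ≤ t)).map Prod.fst).reverse).map Op.inv) =
      snapshot SG0 L t') := by

  have hfa : L.filter (fun p => decide (p.2 ≤ tcur)) = L :=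
    List.filter_eq_self.2 (fun p hp => by simpa using (hts p hp).2)
  -- validity of the prefix up to any time s ≤ tcur
  have hprefix : ∀ s : τ, s ≤ tcur →
      validSeq SG0 ((L.filter (fun p => decide (p.2 ≤ s))).map Prod.fst) := by
    intro s hs
    have hsplit := filter_split (fun p : Op α × τ => p.2) L hmono s tcur hs
    rw [hfa] at hsplit
    have : validSeq SG0 ((L.filter (fun p => decide (p.2 ≤ s))).map Prod.fst ++
        (L.filter (fun p => decide (s < p.2 ∧ p.2 ≤ tcur))).map Prod.fst) := by
      rw [← List.map_append, ← hsplit]; exact hval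
    exact ((validSeq_append _ _ _).1 this).1
  constructor
  · intro htt
    have hsplit := filter_split (fun p : Op α × τ => p.2) L hmono t t' htt
    unfold snapshot
    rw [hsplit, List.map_append, applySeq_append]
  · intro htt
    have hsplit := filter_split (fun p : Op α × τ => p.2) L hmono t' t (le_of_lt htt)
    have hvalt : validSeq SG0 ((L.filter (fun p => decide (p.2 ≤ t))).map Prod.fst) :=
      hprefix t ht.2
    rw [hsplit, List.map_append, validSeq_append] at hvalt
    have hwf' : (snapshot SG0 L t').WellFormed :=
      wf_applySeq hwf (hprefix t' ht'.2)
    have key := applySeq_inv hwf' hvalt.2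
    have hsnap : snapshot SG0 L t =
        applySeq (snapshot SG0 L t')
          ((L.filter (fun p => decide (t' < p.2 ∧ p.2 ≤ t))).map Prod.fst) := by
      unfold snapshot
      rw [hsplit, List.map_append, applySeq_append]
    rw [hsnap]
    exact key
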